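/- Let 1 ≤ p < ∞ and let m : X × X → [1,∞) be measurable with m(x,y) ≥ max(w(x)/w(y), w(y)/w(x)) for all x, y. Suppose there is a constant A such that for all x ∈ X: ∫_X (osc(x,y) + |R(x,y)|) m(x,y) dμ(y) ≤ A, and for all y ∈ X: ∫_X (osc(x,y) + |R(x,y)|) m(x,y) dμ(x) ≤ A. Let ν be a complex Radon measure on X with total variation |ν|, and suppose |ν|(U_i) < ∞ for all i. Then the function x ↦ ∫_X |R(x,y)| d|ν|(y) satisfies ‖ ∫_X |R(·,y)| d|ν|(y) ‖_{L^p_w} ≤ A · ‖ Σ_{i∈I} |ν|(U_i) μ(U_i)^{-1} χ_{U_i} ‖_{L^p_w} (both sides possibly infinite). (Lemma 5.5(b) specialized to Y = L^p_w.) -/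

import Mathlib

open MeasureTheory
open scoped ENNReal NNReal

/-- The oscillation kernel `osc_{𝒰,Γ}(x,y) = sup_{z ∈ Q_y} |R(x,y) − Γ(y,z) R(x,z)|`,
where `Q_y = ⋃_{i : y ∈ U_i} U_i`. -/
noncomputable def osc {X I : Type*} (U : I → Set X) (R Γ : X → X → ℂ) (x y : X) : ℝ≥0∞ :=
  ⨆ z ∈ ⋃ i ∈ {i : I | y ∈ U i}, U i, (‖R x y - Γ y z * R x z‖₊ : ℝ≥0∞)

open Function in
private lemma schur_aux {X : Type*} [MeasurableSpace X] (μ : Measure X) [SigmaFinite μ]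
    {p : ℝ} (hp : 1 ≤ p) {k : X → X → ℝ≥0∞} (hk : Measurable (Function.uncurry k))
    {H : X → ℝ≥0∞} (hH : Measurable H) {A : ℝ≥0∞} (hA0 : A ≠ 0) (hAt : A ≠ ⊤)
    (hrow : ∀ x, ∫⁻ z, k x z ∂μ ≤ A) (hcol : ∀ z, ∫⁻ x, k x z ∂μ ≤ A) :
    (∫⁻ x, (∫⁻ z, k x z * H z ∂μ) ^ p ∂μ) ^ (1/p)
      ≤ A * (∫⁻ z, H z ^ p ∂μ) ^ (1/p) := by
  have hp0 : (0:ℝ) < p := lt_of_lt_of_le one_pos hp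
  have hip : (0:ℝ) ≤ 1/p := by positivity
  have h1p : (0:ℝ) ≤ 1 - 1/p := by
    have h : 1/p ≤ 1 := by
      rw [div_le_one hp0]; exact hp
    linarith
  have hHp : Measurable fun z => H z ^ p := hH.pow_const p
  -- Hölder step
  have holder : ∀ x, ∫⁻ z, k x z * H z ∂μ
      ≤ A ^ (1 - 1/p) * (∫⁻ z, k x z * H z ^ p ∂μ) ^ (1/p) := by
    intro x
    have hkx : Measurable (k x) := hk.of_uncurry_left
    rcases eq_or_lt_of_le hp with hp1 | hp1
    · rw [← hp1]
      simp [ENNReal.rpow_one]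
    · have hc : p.HolderConjugate (p/(p-1)) := Real.HolderConjugate.conjExponent hp1
      have hq := hc.symm
      set q : ℝ := p / (p - 1) with hqdef
      have hq0 : (0:ℝ) < q := hq.pos
      have h1q : 1/q = 1 - 1/p := by
        rw [one_div, one_div, hc.one_sub_inv]
      have key := ENNReal.lintegral_mul_le_Lp_mul_Lq μ hq
        (f := fun z => k x z ^ (1/q)) (g := fun z => k x z ^ (1/p) * H z)
        ((hkx.pow_const _).aemeasurable)
        (((hkx.pow_const _).mul hH).aemeasurable)
      have hfg : ∀ z, k x z * H z = (k x z ^ (1/q)) * (k x z ^ (1/p) * H z) := by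
        intro z
        rw [← mul_assoc, ← ENNReal.rpow_add_of_nonneg _ _ (by linarith [h1q]) hip]
        have : 1/q + 1/p = 1 := by rw [h1q]; ring
        rw [this, ENNReal.rpow_one]
      calc ∫⁻ z, k x z * H z ∂μ
          = ∫⁻ z, ((fun z => k x z ^ (1/q)) * fun z => k x z ^ (1/p) * H z) z ∂μ := by
            apply lintegral_congr; intro z
            simpa using hfg z
        _ ≤ (∫⁻ z, (k x z ^ (1/q)) ^ q ∂μ) ^ (1/q)
              * (∫⁻ z, (k x z ^ (1/p) * H z) ^ p ∂μ) ^ (1/p) := key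
        _ ≤ A ^ (1 - 1/p) * (∫⁻ z, k x z * H z ^ p ∂μ) ^ (1/p) := by
            have e1 : ∀ z : X, (k x z ^ (1/q)) ^ q = k x z := by
              intro z
              rw [← ENNReal.rpow_mul, one_div_mul_cancel hq0.ne', ENNReal.rpow_one]
            have e2 : ∀ z : X, (k x z ^ (1/p) * H z) ^ p = k x z * H z ^ p := by
              intro z
              rw [ENNReal.mul_rpow_of_nonneg _ _ hp0.le, ← ENNReal.rpow_mul,
                one_div_mul_cancel hp0.ne', ENNReal.rpow_one]
            rw [lintegral_congr e1, lintegral_congr e2, ← h1q]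
            exact mul_le_mul_left (ENNReal.rpow_le_rpow (hrow x) (by positivity)) _
  -- pointwise p-th power bound
  have step2 : ∀ x, (∫⁻ z, k x z * H z ∂μ) ^ p
      ≤ (A ^ (1 - 1/p)) ^ p * ∫⁻ z, k x z * H z ^ p ∂μ := by
    intro x
    calc (∫⁻ z, k x z * H z ∂μ) ^ p
        ≤ (A ^ (1 - 1/p) * (∫⁻ z, k x z * H z ^ p ∂μ) ^ (1/p)) ^ p :=
          ENNReal.rpow_le_rpow (holder x) hp0.le
      _ = (A ^ (1 - 1/p)) ^ p * ((∫⁻ z, k x z * H z ^ p ∂μ) ^ (1/p)) ^ p :=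
          ENNReal.mul_rpow_of_nonneg _ _ hp0.le
      _ = (A ^ (1 - 1/p)) ^ p * ∫⁻ z, k x z * H z ^ p ∂μ := by
          rw [← ENNReal.rpow_mul (∫⁻ z, k x z * H z ^ p ∂μ) (1/p) p,
            one_div_mul_cancel hp0.ne', ENNReal.rpow_one]
  -- Tonelli step
  have hkmul : Measurable (Function.uncurry fun x z => k x z * H z ^ p) :=
    hk.mul (hHp.comp measurable_snd)
  have swap : ∫⁻ x, ∫⁻ z, k x z * H z ^ p ∂μ ∂μ ≤ A * ∫⁻ z, H z ^ p ∂μ := by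
    rw [lintegral_lintegral_swap hkmul.aemeasurable]
    calc ∫⁻ z, ∫⁻ x, k x z * H z ^ p ∂μ ∂μ
        = ∫⁻ z, (∫⁻ x, k x z ∂μ) * H z ^ p ∂μ := by
          apply lintegral_congr; intro z
          exact lintegral_mul_const _ (hk.comp (measurable_prodMk_right))
      _ ≤ ∫⁻ z, A * H z ^ p ∂μ :=
          lintegral_mono fun z => mul_le_mul_left (hcol z) _
      _ = A * ∫⁻ z, H z ^ p ∂μ := lintegral_const_mul' _ _ hAt
  have hAp_ne : (A ^ (1 - 1/p)) ^ p ≠ ⊤ := by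
    rw [← ENNReal.rpow_mul]
    exact ENNReal.rpow_ne_top_of_nonneg (by positivity) hAt
  calc (∫⁻ x, (∫⁻ z, k x z * H z ∂μ) ^ p ∂μ) ^ (1/p)
      ≤ ((A ^ (1 - 1/p)) ^ p * (A * ∫⁻ z, H z ^ p ∂μ)) ^ (1/p) := by
        apply ENNReal.rpow_le_rpow _ hip
        calc ∫⁻ x, (∫⁻ z, k x z * H z ∂μ) ^ p ∂μ
            ≤ ∫⁻ x, (A ^ (1 - 1/p)) ^ p * ∫⁻ z, k x z * H z ^ p ∂μ ∂μ :=
              lintegral_mono step2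
          _ = (A ^ (1 - 1/p)) ^ p * ∫⁻ x, ∫⁻ z, k x z * H z ^ p ∂μ ∂μ :=
              lintegral_const_mul' _ _ hAp_ne
          _ ≤ (A ^ (1 - 1/p)) ^ p * (A * ∫⁻ z, H z ^ p ∂μ) :=
              mul_le_mul_right swap _
    _ = A * (∫⁻ z, H z ^ p ∂μ) ^ (1/p) := by
        rw [ENNReal.mul_rpow_of_nonneg _ _ hip, ENNReal.mul_rpow_of_nonneg _ _ hip,
          ← ENNReal.rpow_mul A, ← ENNReal.rpow_mul A, ← mul_assoc,
          ← ENNReal.rpow_add _ _ hA0 hAt]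
        have hx : (1 - 1/p) * p * (1/p) + 1/p = 1 := by field_simp; ring
        rw [hx, ENNReal.rpow_one]

set_option maxHeartbeats 2000000

/-- **Lemma 5.5(b) specialized to `Y = L^p_w`.** If both `A_m`-half-norms of
`osc + |R|` are bounded by `A`, then for the total variation measure `|ν|` of a
complex Radon measure `ν` (modelled here, more generally, by an arbitrary
positive measure `ν` which is finite on each `U_i`) one has
`‖∫_X |R(·,y)| d|ν|(y)‖_{L^p_w} ≤ A ‖Σ_i |ν|(U_i) μ(U_i)⁻¹ χ_{U_i}‖_{L^p_w}`. -/
theorem stmt_12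
    {X : Type*} [MeasurableSpace X] (μ : Measure X)
    {I : Type*} [Countable I] (U : I → Set X)
    (hUmeas : ∀ i, MeasurableSet (U i))
    (hUpos : ∀ i, 0 < μ (U i)) (hUfin : ∀ i, μ (U i) < ∞)
    (hcov : ∀ x : X, ∃ i, x ∈ U i)
    (N : ℕ) (hN : ∀ x : X, {i : I | x ∈ U i}.encard ≤ N)
    (w : X → ℝ) (hw : ∀ x, 0 < w x) (hwm : Measurable w)
    (p : ℝ) (hp : 1 ≤ p)
    (m : X → X → ℝ) (hm1 : ∀ x y, 1 ≤ m x y) (hmmeas : Measurable (Function.uncurry m))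
    (hmw : ∀ x y, max (w x / w y) (w y / w x) ≤ m x y)
    (R Γ : X → X → ℂ) (hRmeas : Measurable (Function.uncurry R))
    (hΓ : ∀ x y, ‖Γ x y‖ = 1)
    (A : ℝ≥0∞)
    (hA1 : ∀ x, ∫⁻ y, (osc U R Γ x y + (‖R x y‖₊ : ℝ≥0∞)) * ENNReal.ofReal (m x y) ∂μ ≤ A)
    (hA2 : ∀ y, ∫⁻ x, (osc U R Γ x y + (‖R x y‖₊ : ℝ≥0∞)) * ENNReal.ofReal (m x y) ∂μ ≤ A)
    (ν : Measure X) (hν : ∀ i, ν (U i) < ∞) :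
    (∫⁻ x, (∫⁻ y, (‖R x y‖₊ : ℝ≥0∞) ∂ν) ^ p * ENNReal.ofReal (w x) ^ p ∂μ) ^ (1/p)
      ≤ A * (∫⁻ x, (∑' i, ν (U i) * (μ (U i))⁻¹
            * (U i).indicator (fun _ => (1 : ℝ≥0∞)) x) ^ p
          * ENNReal.ofReal (w x) ^ p ∂μ) ^ (1/p) := by
  classical
  have hp0 : (0:ℝ) < p := lt_of_lt_of_le one_pos hp
  have hip : (0:ℝ) ≤ 1/p := by positivity
  haveI : SigmaFinite μ := by
    refine Measure.sigmaFinite_of_countable (Set.countable_range U) ?_ ?_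
    · rintro s ⟨i, rfl⟩; exact hUfin i
    · apply Set.eq_univ_of_forall
      intro x
      obtain ⟨i, hi⟩ := hcov x
      exact ⟨U i, Set.mem_range_self i, hi⟩
  set W : X → ℝ≥0∞ := fun x => ENNReal.ofReal (w x) with hWdef
  set M : X → X → ℝ≥0∞ := fun x z => ENNReal.ofReal (m x z) with hMdef
  set G : X → ℝ≥0∞ := fun z =>
    ∑' i, ν (U i) * (μ (U i))⁻¹ * (U i).indicator (fun _ => (1 : ℝ≥0∞)) z with hGdef
  set T : X → ℝ≥0∞ := fun x => ∫⁻ y, (‖R x y‖₊ : ℝ≥0∞) ∂ν with hTdef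
  set D : I → X → ℝ≥0∞ := fun i x => (ν (U i))⁻¹ * ∫⁻ y in U i, (‖R x y‖₊ : ℝ≥0∞) ∂ν with hDdef
  set κ : X → X → ℝ≥0∞ := fun x z => ⨆ i, (U i).indicator (fun _ => D i x) z with hκdef
  set k : X → X → ℝ≥0∞ := fun x z => κ x z * M x z with hkdef
  set H : X → ℝ≥0∞ := fun z => G z * W z with hHdef
  show (∫⁻ x, T x ^ p * W x ^ p ∂μ) ^ (1/p) ≤ A * (∫⁻ x, G x ^ p * W x ^ p ∂μ) ^ (1/p)
  -- measurability facts
  have hWm : Measurable W := ENNReal.measurable_ofReal.comp hwm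
  have hMm : Measurable (Function.uncurry M) := ENNReal.measurable_ofReal.comp hmmeas
  have hRnn : Measurable (fun q : X × X => (‖R q.1 q.2‖₊ : ℝ≥0∞)) :=
    hRmeas.nnnorm.coe_nnreal_ennreal
  have hDm : ∀ i, Measurable (D i) := by
    intro i
    haveI : IsFiniteMeasure (ν.restrict (U i)) :=
      ⟨by rw [Measure.restrict_apply_univ]; exact hν i⟩
    exact (Measurable.lintegral_prod_right
      (f := fun x y => (‖R x y‖₊ : ℝ≥0∞)) hRnn).const_mul _
  have hκm : Measurable (Function.uncurry κ) := by
    have h : ∀ (i : I), Measurable fun q : X × X => (U i).indicator (fun _ => D i q.1) q.2 := by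
      intro i
      have he : (fun q : X × X => (U i).indicator (fun _ => D i q.1) q.2)
          = (Prod.snd ⁻¹' U i).indicator (fun q : X × X => D i q.1) := by
        funext q; by_cases hq : q.2 ∈ U i <;>
          simp [Set.indicator, hq, Set.mem_preimage]
      rw [he]
      exact Measurable.indicator ((hDm i).comp measurable_fst) (measurable_snd (hUmeas i))
    exact Measurable.iSup h
  have hkm : Measurable (Function.uncurry k) := hκm.mul hMm
  have hGm : Measurable G := by
    apply Measurable.ennreal_tsum
    intro i
    exact (measurable_const.indicator (hUmeas i)).const_mul _
  have hHm : Measurable H := hGm.mul hWm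
  -- pointwise comparison with osc
  have hRle : ∀ x z (i : I), z ∈ U i → ∀ y ∈ U i,
      (‖R x y‖₊ : ℝ≥0∞) ≤ osc U R Γ x z + (‖R x z‖₊ : ℝ≥0∞) := by
    intro x z i hz y hy
    have hyQ : y ∈ ⋃ j ∈ {j : I | z ∈ U j}, U j :=
      Set.mem_biUnion (show i ∈ {j : I | z ∈ U j} from hz) hy
    have h1 : (‖R x z - Γ z y * R x y‖₊ : ℝ≥0∞) ≤ osc U R Γ x z :=
      le_iSup₂ (f := fun y' (_ : y' ∈ ⋃ j ∈ {j : I | z ∈ U j}, U j) =>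
        ((‖R x z - Γ z y' * R x y'‖₊ : ℝ≥0∞))) y hyQ
    have hΓn : ‖Γ z y‖₊ = 1 := by
      have h := hΓ z y
      ext
      simpa [coe_nnnorm] using h
    have h2 : (‖R x y‖₊ : ℝ≥0∞) = (‖Γ z y * R x y‖₊ : ℝ≥0∞) := by
      rw [nnnorm_mul, hΓn, one_mul]
    have h3 : Γ z y * R x y = R x z - (R x z - Γ z y * R x y) := by ring
    calc (‖R x y‖₊ : ℝ≥0∞) = ‖R x z - (R x z - Γ z y * R x y)‖₊ := by rw [h2, ← h3]
      _ ≤ (‖R x z‖₊ : ℝ≥0∞) + ‖R x z - Γ z y * R x y‖₊ := by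
          exact_mod_cast nnnorm_sub_le _ _
      _ = (‖R x z - Γ z y * R x y‖₊ : ℝ≥0∞) + ‖R x z‖₊ := add_comm _ _
      _ ≤ osc U R Γ x z + ‖R x z‖₊ := add_le_add_left h1 _
  have hκ_le : ∀ x z, κ x z ≤ osc U R Γ x z + (‖R x z‖₊ : ℝ≥0∞) := by
    intro x z
    refine iSup_le fun i => ?_
    by_cases hz : z ∈ U i
    · rw [Set.indicator_of_mem hz]
      have hb : ∫⁻ y in U i, (‖R x y‖₊ : ℝ≥0∞) ∂ν
          ≤ (osc U R Γ x z + (‖R x z‖₊ : ℝ≥0∞)) * ν (U i) := by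
        calc ∫⁻ y in U i, (‖R x y‖₊ : ℝ≥0∞) ∂ν
            ≤ ∫⁻ _ in U i, (osc U R Γ x z + (‖R x z‖₊ : ℝ≥0∞)) ∂ν :=
              setLIntegral_mono' (hUmeas i) (fun y hy => hRle x z i hz y hy)
          _ = _ := setLIntegral_const _ _
      calc D i x ≤ (ν (U i))⁻¹ * ((osc U R Γ x z + (‖R x z‖₊ : ℝ≥0∞)) * ν (U i)) :=
            mul_le_mul_right hb _
        _ = (osc U R Γ x z + (‖R x z‖₊ : ℝ≥0∞)) * (ν (U i) * (ν (U i))⁻¹) := by ring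
        _ ≤ (osc U R Γ x z + (‖R x z‖₊ : ℝ≥0∞)) * 1 :=
            mul_le_mul_right (ENNReal.mul_inv_le_one _) _
        _ = _ := mul_one _
    · rw [Set.indicator_of_notMem hz]; exact zero_le
  -- Schur row/column bounds
  have hrow : ∀ x, ∫⁻ z, k x z ∂μ ≤ A := by
    intro x
    refine le_trans (lintegral_mono (g := fun z =>
      (osc U R Γ x z + (‖R x z‖₊ : ℝ≥0∞)) * ENNReal.ofReal (m x z)) fun z => ?_) (hA1 x)
    exact mul_le_mul_left (hκ_le x z) _
  have hcol : ∀ z, ∫⁻ x, k x z ∂μ ≤ A := by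
    intro z
    refine le_trans (lintegral_mono (g := fun x =>
      (osc U R Γ x z + (‖R x z‖₊ : ℝ≥0∞)) * ENNReal.ofReal (m x z)) fun x => ?_) (hA2 z)
    exact mul_le_mul_left (hκ_le x z) _
  -- main pointwise bound : T x ≤ ∫ κ x z * G z
  have hT : ∀ x, T x ≤ ∫⁻ z, κ x z * G z ∂μ := by
    intro x
    have hRx : Measurable fun y => (‖R x y‖₊ : ℝ≥0∞) :=
      ((hRmeas.comp measurable_prodMk_left).nnnorm).coe_nnreal_ennreal
    have s1 : T x ≤ ∑' i, ∫⁻ y in U i, (‖R x y‖₊ : ℝ≥0∞) ∂ν := by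
      have hle : ∀ y, (‖R x y‖₊ : ℝ≥0∞)
          ≤ ∑' i, (U i).indicator (fun _ => (1:ℝ≥0∞)) y * (‖R x y‖₊ : ℝ≥0∞) := by
        intro y
        obtain ⟨i, hi⟩ := hcov y
        refine le_trans ?_ (ENNReal.le_tsum i)
        rw [Set.indicator_of_mem hi, one_mul]
      calc T x ≤ ∫⁻ y, ∑' i, (U i).indicator (fun _ => (1:ℝ≥0∞)) y * (‖R x y‖₊:ℝ≥0∞) ∂ν :=
            lintegral_mono hle
        _ = ∑' i, ∫⁻ y, (U i).indicator (fun _ => (1:ℝ≥0∞)) y * (‖R x y‖₊:ℝ≥0∞) ∂ν :=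
            lintegral_tsum fun i =>
              ((measurable_const.indicator (hUmeas i)).mul hRx).aemeasurable
        _ = ∑' i, ∫⁻ y in U i, (‖R x y‖₊:ℝ≥0∞) ∂ν := by
            refine tsum_congr fun i => ?_
            rw [← lintegral_indicator (hUmeas i)]
            apply lintegral_congr; intro y
            by_cases hy : y ∈ U i <;> simp [Set.indicator, hy]
    have s2 : ∀ i, ∫⁻ y in U i, (‖R x y‖₊:ℝ≥0∞) ∂ν ≤ ν (U i) * D i x := by
      intro i
      rcases eq_or_ne (ν (U i)) 0 with h0 | h0
      · rw [Measure.restrict_eq_zero.mpr h0]; simp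
      · refine le_of_eq ?_
        calc ∫⁻ y in U i, (‖R x y‖₊:ℝ≥0∞) ∂ν
            = 1 * ∫⁻ y in U i, (‖R x y‖₊:ℝ≥0∞) ∂ν := (one_mul _).symm
          _ = (ν (U i) * (ν (U i))⁻¹) * ∫⁻ y in U i, (‖R x y‖₊:ℝ≥0∞) ∂ν := by
              rw [ENNReal.mul_inv_cancel h0 (hν i).ne]
          _ = ν (U i) * D i x := by rw [mul_assoc]
    have s3 : ∀ i, D i x ≤ (μ (U i))⁻¹ * ∫⁻ z in U i, κ x z ∂μ := by
      intro i
      have hconst : D i x * μ (U i) ≤ ∫⁻ z in U i, κ x z ∂μ := by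
        calc D i x * μ (U i) = ∫⁻ _ in U i, D i x ∂μ := (setLIntegral_const _ _).symm
          _ ≤ ∫⁻ z in U i, κ x z ∂μ := by
              refine setLIntegral_mono' (hUmeas i) fun z hz => ?_
              have h := le_iSup (fun j => (U j).indicator (fun _ => D j x) z) i
              rwa [Set.indicator_of_mem hz] at h
      calc D i x = (μ (U i))⁻¹ * (D i x * μ (U i)) := by
            rw [mul_comm (D i x), ← mul_assoc,
              ENNReal.inv_mul_cancel (hUpos i).ne' (hUfin i).ne, one_mul]
        _ ≤ _ := mul_le_mul_right hconst _
    have s4 : ∀ i, ν (U i) * D i x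
        ≤ ∫⁻ z, (ν (U i) * (μ (U i))⁻¹ * (U i).indicator (fun _ => (1:ℝ≥0∞)) z) * κ x z ∂μ := by
      intro i
      have hinv_ne : (μ (U i))⁻¹ ≠ ⊤ := by
        simp [ENNReal.inv_ne_top]
        exact (hUpos i).ne'
      have hc_ne : ν (U i) * (μ (U i))⁻¹ ≠ ⊤ := ENNReal.mul_ne_top (hν i).ne hinv_ne
      calc ν (U i) * D i x ≤ ν (U i) * ((μ (U i))⁻¹ * ∫⁻ z in U i, κ x z ∂μ) :=
            mul_le_mul_right (s3 i) _
        _ = (ν (U i) * (μ (U i))⁻¹) * ∫⁻ z in U i, κ x z ∂μ := by rw [mul_assoc]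
        _ = (ν (U i) * (μ (U i))⁻¹) * ∫⁻ z, (U i).indicator (fun z => κ x z) z ∂μ := by
            rw [lintegral_indicator (hUmeas i)]
        _ = ∫⁻ z, (ν (U i) * (μ (U i))⁻¹) * (U i).indicator (fun z => κ x z) z ∂μ :=
            (lintegral_const_mul' _ _ hc_ne).symm
        _ = ∫⁻ z, (ν (U i) * (μ (U i))⁻¹ * (U i).indicator (fun _ => (1:ℝ≥0∞)) z) * κ x z ∂μ := by
            apply lintegral_congr; intro z
            by_cases hz : z ∈ U i <;> simp [Set.indicator, hz, mul_assoc]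
    have hκxm : Measurable (κ x) := hκm.of_uncurry_left
    calc T x ≤ ∑' i, ∫⁻ y in U i, (‖R x y‖₊:ℝ≥0∞) ∂ν := s1
      _ ≤ ∑' i, ν (U i) * D i x := ENNReal.tsum_le_tsum s2
      _ ≤ ∑' i, ∫⁻ z, (ν (U i) * (μ (U i))⁻¹
            * (U i).indicator (fun _ => (1:ℝ≥0∞)) z) * κ x z ∂μ := ENNReal.tsum_le_tsum s4
      _ = ∫⁻ z, ∑' i, (ν (U i) * (μ (U i))⁻¹
            * (U i).indicator (fun _ => (1:ℝ≥0∞)) z) * κ x z ∂μ :=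
          (lintegral_tsum fun i =>
            (((measurable_const.indicator (hUmeas i)).const_mul _).mul hκxm).aemeasurable).symm
      _ = ∫⁻ z, κ x z * G z ∂μ := by
          apply lintegral_congr; intro z
          rw [ENNReal.tsum_mul_right, mul_comm]
  -- case analysis
  have hHS : ∫⁻ z, H z ^ p ∂μ = ∫⁻ x, G x ^ p * W x ^ p ∂μ :=
    lintegral_congr fun z => ENNReal.mul_rpow_of_nonneg _ _ hp0.le
  by_cases hzero : ∫⁻ x, G x ^ p * W x ^ p ∂μ = 0
  · -- RHS integrand vanishes a.e., hence T ≡ 0 and LHS = 0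
    have hae : ∀ᵐ z ∂μ, G z = 0 := by
      have h := (lintegral_eq_zero_iff ((hGm.pow_const p).mul (hWm.pow_const p))).mp hzero
      filter_upwards [h] with z hz
      rcases mul_eq_zero.mp hz with h' | h'
      · rcases ENNReal.rpow_eq_zero_iff.mp h' with ⟨h'', _⟩ | ⟨_, hneg⟩
        · exact h''
        · linarith
      · exfalso
        rcases ENNReal.rpow_eq_zero_iff.mp h' with ⟨h'', _⟩ | ⟨_, hneg⟩
        · exact (ENNReal.ofReal_pos.mpr (hw z)).ne' h''
        · linarith
    have hint0 : ∀ x, ∫⁻ z, κ x z * G z ∂μ = 0 := by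
      intro x
      have : ∀ᵐ z ∂μ, κ x z * G z = 0 := by
        filter_upwards [hae] with z hz
        rw [hz, mul_zero]
      rw [lintegral_congr_ae this, lintegral_zero]
    have hT0 : ∀ x, T x = 0 := fun x => le_antisymm ((hT x).trans (hint0 x).le) (zero_le)
    have hL : ∫⁻ x, T x ^ p * W x ^ p ∂μ = 0 := by
      have : ∀ x, T x ^ p * W x ^ p = 0 := by
        intro x
        rw [hT0 x, ENNReal.zero_rpow_of_pos hp0, zero_mul]
      simp [this]
    rw [hL, ENNReal.zero_rpow_of_pos (by positivity)]
    exact zero_le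
  · by_cases hAt : A = ⊤
    · have hne : (∫⁻ x, G x ^ p * W x ^ p ∂μ) ^ (1/p) ≠ 0 := by
        intro h
        rcases ENNReal.rpow_eq_zero_iff.mp h with ⟨h', _⟩ | ⟨_, hneg⟩
        · exact hzero h'
        · have : (0:ℝ) < 1/p := by positivity
          linarith
      rw [hAt, ENNReal.top_mul hne]
      exact le_top
    · by_cases hA0 : A = 0
      · -- all rows vanish, hence T ≡ 0
        have hk0 : ∀ x, ∫⁻ z, k x z ∂μ = 0 := fun x =>
          le_antisymm (by rw [← hA0]; exact hrow x) (zero_le)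
        have hint0 : ∀ x, ∫⁻ z, κ x z * G z ∂μ = 0 := by
          intro x
          have hae : ∀ᵐ z ∂μ, k x z = 0 :=
            (lintegral_eq_zero_iff hkm.of_uncurry_left).mp (hk0 x)
          have : ∀ᵐ z ∂μ, κ x z * G z = 0 := by
            filter_upwards [hae] with z hz
            rcases mul_eq_zero.mp hz with h' | h'
            · rw [h', zero_mul]
            · exact absurd h'
                (ENNReal.ofReal_pos.mpr (lt_of_lt_of_le one_pos (hm1 x z))).ne'
          rw [lintegral_congr_ae this, lintegral_zero]
        have hT0 : ∀ x, T x = 0 := fun x => le_antisymm ((hT x).trans (hint0 x).le) (zero_le)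
        have hL : ∫⁻ x, T x ^ p * W x ^ p ∂μ = 0 := by
          have : ∀ x, T x ^ p * W x ^ p = 0 := by
            intro x
            rw [hT0 x, ENNReal.zero_rpow_of_pos hp0, zero_mul]
          simp [this]
        rw [hL, ENNReal.zero_rpow_of_pos (by positivity)]
        exact zero_le
      · -- main case
        calc (∫⁻ x, T x ^ p * W x ^ p ∂μ) ^ (1/p)
            = (∫⁻ x, (T x * W x) ^ p ∂μ) ^ (1/p) := by
              congr 1
              exact lintegral_congr fun x => (ENNReal.mul_rpow_of_nonneg _ _ hp0.le).symm
          _ ≤ (∫⁻ x, (∫⁻ z, k x z * H z ∂μ) ^ p ∂μ) ^ (1/p) := by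
              refine ENNReal.rpow_le_rpow (lintegral_mono fun x => ?_) hip
              refine ENNReal.rpow_le_rpow ?_ hp0.le
              calc T x * W x ≤ (∫⁻ z, κ x z * G z ∂μ) * W x := mul_le_mul_left (hT x) _
                _ = ∫⁻ z, κ x z * G z * W x ∂μ :=
                    (lintegral_mul_const' _ _ ENNReal.ofReal_ne_top).symm
                _ ≤ ∫⁻ z, k x z * H z ∂μ := by
                    refine lintegral_mono fun z => ?_
                    have hwle : W x ≤ M x z * W z := by
                      have hmul : M x z * W z = ENNReal.ofReal (m x z * w z) :=
                        (ENNReal.ofReal_mul (le_trans zero_le_one (hm1 x z))).symm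
                      rw [hmul]
                      apply ENNReal.ofReal_le_ofReal
                      have h1 : w x / w z ≤ m x z := le_trans (le_max_left _ _) (hmw x z)
                      rw [div_le_iff₀ (hw z)] at h1
                      exact h1
                    calc κ x z * G z * W x ≤ κ x z * G z * (M x z * W z) :=
                          mul_le_mul_right hwle _
                      _ = k x z * H z := by
                          show _ = κ x z * M x z * (G z * W z)
                          ring
          _ ≤ A * (∫⁻ z, H z ^ p ∂μ) ^ (1/p) := schur_aux μ hp hkm hHm hA0 hAt hrow hcol
          _ = A * (∫⁻ x, G x ^ p * W x ^ p ∂μ) ^ (1/p) := by rw [hHS]
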